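/- The definition of the angle σ(V,W) between two subspaces V, W of a Euclidean space E is independent of the choice of bases: if v, v' are bases of V ∩ (V∩W)^⊥ and w, w' are bases of W ∩ (V∩W)^⊥, then vol(v w)/(vol(v)vol(w)) = vol(v' w')/(vol(v')vol(w')). -/

import Mathlib

open scoped InnerProductSpace

/-- The volume of a tuple of vectors: the square root of the determinant of
its Gram matrix. -/
noncomputable def tupleVol {E : Type*} [NormedAddCommGroup E] [InnerProductSpace ℝ E]
    {k : ℕ} (f : Fin k → E) : ℝ :=
  Real.sqrt (Matrix.det (Matrix.of fun i j => (inner ℝ (f i) (f j) : ℝ)))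

open Matrix

lemma gram_comp {E : Type*} [NormedAddCommGroup E] [InnerProductSpace ℝ E]
    {ι : Type*} [Fintype ι] (g f : ι → E) (A : Matrix ι ι ℝ)
    (hf : ∀ j, f j = ∑ i, A i j • g i) :
    (Matrix.of fun a b => (inner ℝ (f a) (f b) : ℝ))
      = Aᵀ * (Matrix.of fun a b => (inner ℝ (g a) (g b) : ℝ)) * A := by
  ext a b
  simp only [Matrix.mul_apply, Matrix.transpose_apply, Matrix.of_apply, hf,
    sum_inner, inner_sum, real_inner_smul_left, real_inner_smul_right, Finset.sum_mul]
  refine Finset.sum_congr rfl fun i _ => Finset.sum_congr rfl fun j _ => ?_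
  ring

lemma tupleVol_comp {E : Type*} [NormedAddCommGroup E] [InnerProductSpace ℝ E]
    {n : ℕ} (g f : Fin n → E) (A : Matrix (Fin n) (Fin n) ℝ)
    (hf : ∀ j, f j = ∑ i, A i j • g i) :
    tupleVol f = |A.det| * tupleVol g := by
  unfold tupleVol
  rw [gram_comp g f A hf, Matrix.det_mul, Matrix.det_mul, Matrix.det_transpose,
    mul_comm A.det _, mul_assoc, ← pow_two, mul_comm,
    Real.sqrt_mul (sq_nonneg _), Real.sqrt_sq_eq_abs]

/-- The defining ratio of the angle `σ(V,W)` does not depend on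
the choice of bases: if `v, v'` are bases of `V ⊓ (V ⊓ W)ᗮ` and `w, w'` are bases of
`W ⊓ (V ⊓ W)ᗮ`, then `vol(v w)/(vol v · vol w) = vol(v' w')/(vol v' · vol w')`. -/
theorem stmt3 {E : Type*} [NormedAddCommGroup E] [InnerProductSpace ℝ E]
    [FiniteDimensional ℝ E] (V W : Submodule ℝ E) (hVW : ¬ V ≤ W) (hWV : ¬ W ≤ V)
    {k k' l l' : ℕ}
    (v : Module.Basis (Fin k) ℝ ↥(V ⊓ (V ⊓ W)ᗮ)) (v' : Module.Basis (Fin k') ℝ ↥(V ⊓ (V ⊓ W)ᗮ))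
    (w : Module.Basis (Fin l) ℝ ↥(W ⊓ (V ⊓ W)ᗮ)) (w' : Module.Basis (Fin l') ℝ ↥(W ⊓ (V ⊓ W)ᗮ)) :
    tupleVol (Fin.append (fun i => (v i : E)) (fun j => (w j : E))) /
        (tupleVol (fun i => (v i : E)) * tupleVol (fun j => (w j : E)))
      = tupleVol (Fin.append (fun i => (v' i : E)) (fun j => (w' j : E))) /
          (tupleVol (fun i => (v' i : E)) * tupleVol (fun j => (w' j : E))) := by
  have hk : k = k' := by
    have h1 := Module.finrank_eq_card_basis v
    have h2 := Module.finrank_eq_card_basis v'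
    rw [Fintype.card_fin] at h1 h2; omega
  subst hk
  have hl : l = l' := by
    have h1 := Module.finrank_eq_card_basis w
    have h2 := Module.finrank_eq_card_basis w'
    rw [Fintype.card_fin] at h1 h2; omega
  subst hl
  set P : Matrix (Fin k) (Fin k) ℝ := v.toMatrix ⇑v' with hP
  set Q : Matrix (Fin l) (Fin l) ℝ := w.toMatrix ⇑w' with hQ
  have hv' : ∀ j, ((v' j : E)) = ∑ i, P i j • (v i : E) := by
    intro j
    have := v.sum_toMatrix_smul_self ⇑v' j
    calc (v' j : E) = ((∑ i, P i j • v i : ↥(V ⊓ (V ⊓ W)ᗮ)) : E) := by rw [this]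
    _ = ∑ i, P i j • (v i : E) := by push_cast; rfl
  have hw' : ∀ j, ((w' j : E)) = ∑ i, Q i j • (w i : E) := by
    intro j
    have := w.sum_toMatrix_smul_self ⇑w' j
    calc (w' j : E) = ((∑ i, Q i j • w i : ↥(W ⊓ (V ⊓ W)ᗮ)) : E) := by rw [this]
    _ = ∑ i, Q i j • (w i : E) := by push_cast; rfl
  set R : Matrix (Fin (k + l)) (Fin (k + l)) ℝ :=
    (Matrix.fromBlocks P 0 0 Q).submatrix finSumFinEquiv.symm finSumFinEquiv.symm with hR
  have hRdet : R.det = P.det * Q.det := by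
    rw [hR, Matrix.det_submatrix_equiv_self, Matrix.det_fromBlocks_zero₂₁]
  have happ : ∀ j, Fin.append (fun i => (v' i : E)) (fun j => (w' j : E)) j
      = ∑ i, R i j • Fin.append (fun i => (v i : E)) (fun j => (w j : E)) i := by
    intro j
    rw [← Equiv.sum_comp finSumFinEquiv
      (fun i => R i j • Fin.append (fun i => (v i : E)) (fun j => (w j : E)) i),
      Fintype.sum_sum_type]
    induction j using Fin.addCases with
    | left jv =>
        simp [hR, Fin.append_left, Fin.append_right, hv' jv]
    | right jw =>
        simp [hR, Fin.append_left, Fin.append_right, hw' jw]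
  have hVv : tupleVol (fun i => (v' i : E)) = |P.det| * tupleVol (fun i => (v i : E)) :=
    tupleVol_comp _ _ P hv'
  have hVw : tupleVol (fun j => (w' j : E)) = |Q.det| * tupleVol (fun j => (w j : E)) :=
    tupleVol_comp _ _ Q hw'
  have hVa : tupleVol (Fin.append (fun i => (v' i : E)) (fun j => (w' j : E)))
      = |P.det| * |Q.det| * tupleVol (Fin.append (fun i => (v i : E)) (fun j => (w j : E))) := by
    rw [tupleVol_comp _ _ R happ, hRdet, abs_mul]
  rw [hVv, hVw, hVa]
  by_cases h0 : tupleVol (fun i => (v i : E)) * tupleVol (fun j => (w j : E)) = 0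
  · rw [h0, div_zero]
    rcases mul_eq_zero.mp h0 with h | h <;> simp [h]
  · have hPd : |P.det| ≠ 0 := by
      have hPQ : v'.toMatrix ⇑v * P = 1 := Module.Basis.toMatrix_mul_toMatrix_flip v' v
      have hdet := congrArg Matrix.det hPQ
      rw [Matrix.det_mul, Matrix.det_one] at hdet
      intro h
      rw [abs_eq_zero.mp h, mul_zero] at hdet
      exact one_ne_zero hdet.symm
    have hQd : |Q.det| ≠ 0 := by
      have hPQ : w'.toMatrix ⇑w * Q = 1 := Module.Basis.toMatrix_mul_toMatrix_flip w' w
      have hdet := congrArg Matrix.det hPQ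
      rw [Matrix.det_mul, Matrix.det_one] at hdet
      intro h
      rw [abs_eq_zero.mp h, mul_zero] at hdet
      exact one_ne_zero hdet.symm
    have hre : (|P.det| * tupleVol (fun i => (v i : E))) * (|Q.det| * tupleVol (fun j => (w j : E)))
        = (|P.det| * |Q.det|) * (tupleVol (fun i => (v i : E)) * tupleVol (fun j => (w j : E))) := by
      ring
    rw [hre, mul_div_mul_left _ _ (mul_ne_zero hPd hQd)]
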